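/- Let A ∈ ℝ^{n×n} satisfy A_{ii} ≤ 0, A_{ij} ≥ 0 for j ≠ i, and ∑_{j=1}^n A_{ij} = 0 for every i. Then A has at least one zero eigenvalue and all non-zero eigenvalues of A have negative real part. Moreover, A has exactly one zero eigenvalue if and only if the directed graph associated with A (with an edge (j,i) whenever A_{ij} > 0) contains a directed spanning tree. -/

import Mathlib

open Matrix Finset Polynomial

private lemma auxDetZero {m : Type*} [Fintype m] [DecidableEq m] [Nonempty m]
    (B : Matrix m m ℂ) (h : ∀ i, ∑ j, B i j = 0) : B.det = 0 := by
  rw [← Matrix.exists_mulVec_eq_zero_iff]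
  refine ⟨fun _ => 1, ?_, ?_⟩
  · intro hv
    have := congrFun hv (Classical.arbitrary m)
    simp at this
  · funext i
    simpa [Matrix.mulVec, dotProduct] using h i

private lemma auxRow {n : ℕ} (A : Matrix (Fin n) (Fin n) ℝ)
    (hoff : ∀ i j, i ≠ j → 0 ≤ A i j) (hrow : ∀ i, ∑ j, A i j = 0)
    (y : Fin n → ℝ) (hy : A.mulVec y = 0) (m : ℝ) (hm : ∀ j, y j ≤ m)
    (z : Fin n) (hz : y z = m) : ∀ k, 0 < A z k → y k = m := by
  intro k hk
  have e1 : ∑ j, A z j * y j = 0 := by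
    have := congrFun hy z
    simpa [Matrix.mulVec, dotProduct] using this
  have e2 : ∑ j ∈ Finset.univ.erase z, A z j * y j = -(A z z * y z) := by
    rw [Finset.sum_erase_eq_sub (Finset.mem_univ z), e1]; ring
  have e3 : ∑ j ∈ Finset.univ.erase z, A z j = -A z z := by
    rw [Finset.sum_erase_eq_sub (Finset.mem_univ z), hrow z]; ring
  have h0 : ∑ j ∈ Finset.univ.erase z, A z j * (y j - y z) = 0 := by
    simp only [mul_sub]
    rw [Finset.sum_sub_distrib, e2, ← Finset.sum_mul, e3]; ring
  have hterm := (Finset.sum_eq_zero_iff_of_nonpos ?_).mp h0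
  · rcases eq_or_ne k z with rfl | hkz
    · exact hz
    · have h1 := hterm k (Finset.mem_erase.mpr ⟨hkz, Finset.mem_univ _⟩)
      rcases mul_eq_zero.mp h1 with h | h
      · exact absurd h hk.ne'
      · have : y k = y z := by linarith
        rw [this, hz]
  · intro j hj
    have hjz : j ≠ z := (Finset.mem_erase.mp hj).1
    have h1 : 0 ≤ A z j := hoff z j (Ne.symm hjz)
    have h2 : y j - y z ≤ 0 := by have := hm j; linarith
    exact mul_nonpos_of_nonneg_of_nonpos h1 h2

private lemma auxMax {n : ℕ} (A : Matrix (Fin n) (Fin n) ℝ)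
    (hoff : ∀ i j, i ≠ j → 0 ≤ A i j) (hrow : ∀ i, ∑ j, A i j = 0)
    (y : Fin n → ℝ) (hy : A.mulVec y = 0) (r : Fin n)
    (hr : ∀ j, Relation.ReflTransGen (fun x y => 0 < A y x) r j) :
    ∀ j, y j ≤ y r := by
  obtain ⟨i0, -, hi0⟩ := Finset.exists_max_image Finset.univ y ⟨r, Finset.mem_univ r⟩
  have hm : ∀ j, y j ≤ y i0 := fun j => hi0 j (Finset.mem_univ j)
  have key : ∀ a, Relation.ReflTransGen (fun x y => 0 < A y x) a i0 → y a = y i0 := by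
    intro a h
    induction h using Relation.ReflTransGen.head_induction_on with
    | refl => rfl
    | head h' _ ih =>
      exact auxRow A hoff hrow y hy (y i0) hm _ ih _ h'
  have hroot : y r = y i0 := key r (hr i0)
  intro j
  rw [hroot]
  exact hm j

private lemma auxNonpos {n : ℕ} [Nonempty (Fin n)] (A : Matrix (Fin n) (Fin n) ℝ)
    (hoff : ∀ i j, i ≠ j → 0 ≤ A i j) (hrow : ∀ i, ∑ j, A i j = 0)
    (y : Fin n → ℝ) (c : ℝ) (hy : ∀ i, A.mulVec y i = c) : c ≤ 0 := by
  obtain ⟨i0, -, hi0⟩ := Finset.exists_max_image Finset.univ y Finset.univ_nonempty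
  have e1 : ∑ j, A i0 j * y j = c := by
    have := hy i0
    simpa [Matrix.mulVec, dotProduct] using this
  have h2 : ∑ j, A i0 j * y j ≤ ∑ j, A i0 j * y i0 := by
    apply Finset.sum_le_sum
    intro j _
    rcases eq_or_ne j i0 with rfl | hji
    · exact le_rfl
    · exact mul_le_mul_of_nonneg_left (hi0 j (Finset.mem_univ j)) (hoff i0 j (Ne.symm hji))
  have h3 : ∑ j, A i0 j * y i0 = 0 := by
    rw [← Finset.sum_mul, hrow i0, zero_mul]
  linarith

theorem stmt13 {n : ℕ} (hn : 0 < n) (A : Matrix (Fin n) (Fin n) ℝ)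
    (hdiag : ∀ i, A i i ≤ 0) (hoff : ∀ i j, i ≠ j → 0 ≤ A i j)
    (hrow : ∀ i, ∑ j, A i j = 0) :
    (0 : ℂ) ∈ spectrum ℂ (A.map Complex.ofReal) ∧
    (∀ μ ∈ spectrum ℂ (A.map Complex.ofReal), μ ≠ 0 → μ.re < 0) ∧
    ((A.map Complex.ofReal).charpoly.rootMultiplicity 0 = 1 ↔
      ∃ root : Fin n, ∀ j, Relation.ReflTransGen (fun x y => 0 < A y x) root j) := by
  classical
  have hnem : Nonempty (Fin n) := ⟨⟨0, hn⟩⟩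
  set A' := A.map Complex.ofReal with hA'
  have hA'app : ∀ i j, A' i j = (A i j : ℂ) := fun i j => rfl
  have hrow' : ∀ i, ∑ j, A' i j = 0 := by
    intro i
    simp only [hA'app, ← Complex.ofReal_sum, hrow i, Complex.ofReal_zero]
  have hdet : A'.det = 0 := auxDetZero A' hrow'
  -- Part 1
  have part1 : (0 : ℂ) ∈ spectrum ℂ A' := by
    rw [spectrum.mem_iff]
    intro hu
    rw [map_zero, zero_sub, Matrix.isUnit_iff_isUnit_det] at hu
    have : (-A').det = 0 := by simp [Matrix.det_neg, hdet]
    rw [this] at hu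
    exact hu.ne_zero rfl
  -- Part 2
  have part2 : ∀ μ ∈ spectrum ℂ A', μ ≠ 0 → μ.re < 0 := by
    intro μ hμ hμ0
    rw [spectrum.mem_iff, Matrix.isUnit_iff_isUnit_det, isUnit_iff_ne_zero, not_ne_iff] at hμ
    obtain ⟨v, hv0, hv⟩ := (Matrix.exists_mulVec_eq_zero_iff).mpr hμ
    have heig : A'.mulVec v = μ • v := by
      rw [Matrix.sub_mulVec] at hv
      have h1 : (algebraMap ℂ (Matrix (Fin n) (Fin n) ℂ) μ).mulVec v = μ • v := by
        rw [Algebra.algebraMap_eq_smul_one, Matrix.smul_mulVec, Matrix.one_mulVec]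
      rw [h1] at hv
      linear_combination (norm := abel) -hv
    have heigv : Module.End.HasEigenvalue (Matrix.toLin' A') μ := by
      apply Module.End.hasEigenvalue_of_hasEigenvector (x := v)
      refine ⟨Module.End.mem_eigenspace_iff.mpr ?_, hv0⟩
      rw [Matrix.toLin'_apply, heig]
    obtain ⟨k, hk⟩ := eigenvalue_mem_ball heigv
    have hrad : ∑ j ∈ Finset.univ.erase k, ‖A' k j‖ = -A k k := by
      have h1 : ∀ j ∈ Finset.univ.erase k, ‖A' k j‖ = A k j := by
        intro j hj
        have hjk : j ≠ k := (Finset.mem_erase.mp hj).1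
        rw [hA'app, Complex.norm_real, Real.norm_eq_abs, abs_of_nonneg (hoff k j (Ne.symm hjk))]
      rw [Finset.sum_congr rfl h1, Finset.sum_erase_eq_sub (Finset.mem_univ k), hrow k]
      ring
    rw [hrad, Metric.mem_closedBall, Complex.dist_eq] at hk
    have hc : A k k ≤ 0 := hdiag k
    rw [hA'app] at hk
    have habs : ‖μ - (A k k : ℂ)‖ ^ 2 ≤ (A k k) ^ 2 := by
      have h1 : (0:ℝ) ≤ ‖μ - (A k k : ℂ)‖ := norm_nonneg _
      have h2 := mul_self_le_mul_self h1 hk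
      nlinarith [h2]
    rw [Complex.sq_norm, Complex.normSq_apply] at habs
    have hre : (μ - (A k k : ℂ)).re = μ.re - A k k := by simp
    have him : (μ - (A k k : ℂ)).im = μ.im := by simp
    rw [hre, him] at habs
    by_contra hcon
    push_neg at hcon
    have h1 : μ.re = 0 := by nlinarith
    have h2 : μ.im = 0 := by nlinarith
    exact hμ0 (Complex.ext h1 h2)
  -- Part 3, backward: spanning tree implies multiplicity one
  have mpr : (∃ root : Fin n, ∀ j, Relation.ReflTransGen (fun x y => 0 < A y x) root j) →
      A'.charpoly.rootMultiplicity 0 = 1 := by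
    rintro ⟨r, hr⟩
    set B := charmatrix A' with hB
    have hBsum : ∀ i, ∑ j, B i j = (X : ℂ[X]) := by
      intro i
      have h1 : ∀ j, B i j = (Matrix.diagonal fun _ : Fin n => (X : ℂ[X])) i j - C (A' i j) :=
        fun j => charmatrix_apply A' i j
      rw [Finset.sum_congr rfl fun j _ => h1 j, Finset.sum_sub_distrib, ← map_sum, hrow' i,
        map_zero, sub_zero]
      simp [Matrix.diagonal_apply]
    have hq1 : (B.updateCol r fun k => ∑ j, B k j).det = B.det := by
      have h := Matrix.det_updateCol_sum B r (fun _ => (1 : ℂ[X]))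
      simpa using h
    set q := (B.updateCol r fun _ => (1 : ℂ[X])).det with hq
    have hfac : A'.charpoly = X * q := by
      have h0 : A'.charpoly = B.det := rfl
      rw [h0, ← hq1]
      have h2 : (B.updateCol r fun k => ∑ j, B k j) = B.updateCol r fun _ => (X : ℂ[X]) := by
        rw [show (fun k => ∑ j, B k j) = (fun _ : Fin n => (X : ℂ[X])) from funext hBsum]
      rw [h2]
      have h3 : (fun _ : Fin n => (X : ℂ[X])) = (X : ℂ[X]) • fun _ : Fin n => (1 : ℂ[X]) := by
        funext k; simp
      rw [h3, Matrix.det_updateCol_smul]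
    -- evaluate q at 0
    set Mr : Matrix (Fin n) (Fin n) ℝ := (-A).updateCol r (fun _ => (1:ℝ)) with hMr
    have hqeval : q.eval 0 = ((Mr.map Complex.ofReal).det) := by
      have h1 : q.eval 0 = (Polynomial.evalRingHom (0:ℂ)) q := rfl
      rw [h1, hq, RingHom.map_det]
      congr 1
      ext i j
      rcases eq_or_ne j r with rfl | hjr
      · simp [hMr, Matrix.updateCol_apply, Matrix.map_apply, RingHom.mapMatrix_apply]
      · simp only [hMr, RingHom.mapMatrix_apply, Matrix.map_apply, Matrix.updateCol_apply,
          if_neg hjr, Matrix.neg_apply]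
        rcases eq_or_ne i j with rfl | hij
        · simp [hB, hA'app]
        · simp [hB, charmatrix_apply_ne _ _ _ hij, hA'app]
    have hMrdet : Mr.det ≠ 0 := by
      rw [Ne, ← Matrix.exists_mulVec_eq_zero_iff]
      rintro ⟨v, hv0, hv⟩
      set y : Fin n → ℝ := fun j => if j = r then 0 else v j with hy
      have hAy : ∀ i, A.mulVec y i = v r := by
        intro i
        have h1 := congrFun hv i
        simp only [hMr, Matrix.mulVec, dotProduct, Matrix.updateCol_apply,
          Pi.zero_apply] at h1 ⊢
        rw [← Finset.add_sum_erase Finset.univ _ (Finset.mem_univ r)] at h1 ⊢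
        simp only [hy, eq_self_iff_true, if_true] at h1 ⊢
        have h2 : ∑ j ∈ Finset.univ.erase r, (if j = r then (1:ℝ) else (-A) i j) * v j
            = -∑ j ∈ Finset.univ.erase r, A i j * v j := by
          rw [← Finset.sum_neg_distrib]
          apply Finset.sum_congr rfl
          intro j hj
          rw [if_neg (Finset.mem_erase.mp hj).1]
          simp [Matrix.neg_apply]
        rw [h2] at h1
        have h3 : ∑ j ∈ Finset.univ.erase r, A i j * (if j = r then 0 else v j)
            = ∑ j ∈ Finset.univ.erase r, A i j * v j := by
          apply Finset.sum_congr rfl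
          intro j hj
          rw [if_neg (Finset.mem_erase.mp hj).1]
        rw [h3]
        linarith
      have hc : v r = 0 := by
        have h1 : v r ≤ 0 := auxNonpos A hoff hrow y (v r) hAy
        have h2 : -(v r) ≤ 0 := by
          apply auxNonpos A hoff hrow (-y) (-(v r))
          intro i
          rw [Matrix.mulVec_neg, Pi.neg_apply, hAy i]
        linarith
      have hy0 : A.mulVec y = 0 := by
        funext i
        rw [hAy i, hc]
        rfl
      have hmax := auxMax A hoff hrow y hy0 r hr
      have hmin := auxMax A hoff hrow (-y) (by rw [Matrix.mulVec_neg, hy0, neg_zero]) r hr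
      have hyr : y r = 0 := by simp [hy]
      have hyzero : ∀ j, y j = 0 := by
        intro j
        have h1 := hmax j
        have h2 := hmin j
        simp only [Pi.neg_apply] at h2
        rw [hyr] at h1
        have : -y r = 0 := by rw [hyr]; ring
        rw [this] at h2
        linarith
      apply hv0
      funext j
      rcases eq_or_ne j r with rfl | hjr
      · exact hc
      · have := hyzero j
        rw [hy] at this
        simpa [if_neg hjr] using this
    have hqeval0 : q.eval 0 ≠ 0 := by
      rw [hqeval]
      intro h
      apply hMrdet
      have h2 := RingHom.map_det Complex.ofRealHom Mr
      rw [RingHom.mapMatrix_apply] at h2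
      have h3 : ((Mr.det : ℝ) : ℂ) = 0 := by
        rw [show ((Mr.det : ℝ) : ℂ) = (Mr.map Complex.ofReal).det from h2, h]
      exact_mod_cast h3
    have hqne : q ≠ 0 := by
      intro h
      rw [h] at hqeval0
      simp at hqeval0
    rw [hfac, Polynomial.rootMultiplicity_mul (mul_ne_zero Polynomial.X_ne_zero hqne)]
    have h1 : Polynomial.rootMultiplicity (0:ℂ) X = 1 := by
      have := Polynomial.rootMultiplicity_X_sub_C_self (x := (0:ℂ))
      simpa using this
    have h2 : Polynomial.rootMultiplicity (0:ℂ) q = 0 :=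
      Polynomial.rootMultiplicity_eq_zero (by simpa [Polynomial.IsRoot] using hqeval0)
    rw [h1, h2]
  -- Part 3, forward: multiplicity one implies spanning tree
  have mp : A'.charpoly.rootMultiplicity 0 = 1 →
      ∃ root : Fin n, ∀ j, Relation.ReflTransGen (fun x y => 0 < A y x) root j := by
    intro hmult
    by_contra hno
    push_neg at hno
    set s : Fin n → Fin n → Prop := fun x y => 0 < A y x with hs
    set Rch : Fin n → Finset (Fin n) :=
      fun u => Finset.univ.filter (fun j => Relation.ReflTransGen s u j) with hRch
    obtain ⟨u, -, hu⟩ := Finset.exists_max_image Finset.univ (fun z => (Rch z).card)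
      Finset.univ_nonempty
    obtain ⟨w, hw⟩ := hno u
    have hdisj : ∀ z, Relation.ReflTransGen s z u → ¬ Relation.ReflTransGen s z w := by
      intro z hzu hzw
      have hsub : Rch u ⊆ Rch z := by
        intro x hx
        rw [hRch, Finset.mem_filter] at hx ⊢
        exact ⟨Finset.mem_univ x, hzu.trans hx.2⟩
      have heq : Rch u = Rch z :=
        Finset.eq_of_subset_of_card_le hsub (hu z (Finset.mem_univ z))
      apply hw
      have hwz : w ∈ Rch z := by
        rw [hRch, Finset.mem_filter]
        exact ⟨Finset.mem_univ w, hzw⟩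
      rw [← heq, hRch, Finset.mem_filter] at hwz
      exact hwz.2
    set b : Fin n → ℕ := fun i =>
      if Relation.ReflTransGen s i u then 2 else if Relation.ReflTransGen s i w then 1 else 0
      with hb
    have hbu : b u = 2 := by
      have h0 : Relation.ReflTransGen s u u := Relation.ReflTransGen.refl
      simp [hb, h0]
    have hbw : b w = 1 := by
      have h1 : ¬ Relation.ReflTransGen s w u := fun h => hdisj w h Relation.ReflTransGen.refl
      have h2 : Relation.ReflTransGen s w w := Relation.ReflTransGen.refl
      simp [hb, h1, h2]
    have hstep : ∀ i j, A i j ≠ 0 → i ≠ j → s j i := by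
      intro i j h hne
      exact lt_of_le_of_ne (hoff i j hne) (Ne.symm h)
    have hzero : ∀ i j, b i ≠ 0 → b j ≠ b i → A i j = 0 := by
      intro i j hbi hbji
      by_contra hA0
      have hij : i ≠ j := by rintro rfl; exact hbji rfl
      have hji : Relation.ReflTransGen s j i := Relation.ReflTransGen.single (hstep i j hA0 hij)
      by_cases h2 : Relation.ReflTransGen s i u
      · have h3 : Relation.ReflTransGen s j u := hji.trans h2
        apply hbji
        simp [hb, h2, h3]
      · by_cases h4 : Relation.ReflTransGen s i w
        · have h5 : Relation.ReflTransGen s j w := hji.trans h4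
          have h6 : ¬ Relation.ReflTransGen s j u := fun h => hdisj j h h5
          apply hbji
          simp [hb, h2, h4, h5, h6]
        · apply hbi
          simp [hb, h2, h4]
    have hBT : A'.BlockTriangular b := by
      intro i j hij
      have h1 : b i ≠ 0 := by omega
      have h2 : b j ≠ b i := by omega
      rw [hA'app, hzero i j h1 h2, Complex.ofReal_zero]
    have hfac := hBT.charpoly
    have h2mem : (2:ℕ) ∈ Finset.image b Finset.univ :=
      Finset.mem_image.mpr ⟨u, Finset.mem_univ u, hbu⟩
    have h1mem : (1:ℕ) ∈ Finset.image b Finset.univ :=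
      Finset.mem_image.mpr ⟨w, Finset.mem_univ w, hbw⟩
    have hXdvd : ∀ a : ℕ, a ≠ 0 → a ∈ Finset.image b Finset.univ →
        (X : ℂ[X]) ∣ (A'.toSquareBlock b a).charpoly := by
      intro a ha hmem
      obtain ⟨i0, -, hi0⟩ := Finset.mem_image.mp hmem
      have hne : Nonempty {i // b i = a} := ⟨⟨i0, hi0⟩⟩
      have hdet0 : (A'.toSquareBlock b a).det = 0 := by
        apply auxDetZero
        rintro ⟨i, hi⟩
        have h1 : ∑ j ∈ Finset.univ.filter (fun k => b k = a), A' i j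
            = ∑ j : {k // b k = a}, A' i j.1 :=
          Finset.sum_subtype _ (by simp) _
        show ∑ j : {k // b k = a}, A' i j.1 = 0
        rw [← h1]
        have h2 : ∑ j ∈ Finset.univ.filter (fun k => b k = a), A' i j = ∑ j, A' i j := by
          rw [← Finset.sum_filter_add_sum_filter_not Finset.univ (fun k => b k = a) (A' i ·)]
          have h3 : ∑ j ∈ Finset.univ.filter (fun k => ¬ b k = a), A' i j = 0 := by
            apply Finset.sum_eq_zero
            intro j hj
            have hja : b j ≠ a := (Finset.mem_filter.mp hj).2
            rw [hA'app, hzero i j (hi ▸ ha) (by rw [hi]; exact hja), Complex.ofReal_zero]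
          rw [h3, add_zero]
        rw [h2, hrow' i]
      rw [Polynomial.X_dvd_iff]
      have hsign := Matrix.det_eq_sign_charpoly_coeff (A'.toSquareBlock b a)
      rw [hdet0] at hsign
      have hne1 : ((-1 : ℂ) ^ Fintype.card {k // b k = a}) ≠ 0 := by
        apply pow_ne_zero
        norm_num
      have h5 : ((-1:ℂ)) ^ Fintype.card {k // b k = a}
          * (A'.toSquareBlock b a).charpoly.coeff 0 = 0 := hsign.symm
      rcases mul_eq_zero.mp h5 with h | h
      · exact absurd h hne1
      · exact h
    have hdvd : (X : ℂ[X]) ^ 2 ∣ A'.charpoly := by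
      rw [hfac, ← Finset.mul_prod_erase _ _ h2mem]
      have h1mem' : (1:ℕ) ∈ (Finset.image b Finset.univ).erase 2 :=
        Finset.mem_erase.mpr ⟨by norm_num, h1mem⟩
      rw [← Finset.mul_prod_erase _ _ h1mem', pow_two]
      exact mul_dvd_mul (hXdvd 2 (by norm_num) h2mem)
        (dvd_mul_of_dvd_left (hXdvd 1 (by norm_num) h1mem) _)
    have h2le : 2 ≤ A'.charpoly.rootMultiplicity 0 := by
      rw [Polynomial.le_rootMultiplicity_iff (A'.charpoly_monic.ne_zero)]
      simpa using hdvd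
    omega
  exact ⟨part1, part2, mp, mpr⟩
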